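/- With B and ψ the relativised collapsing hierarchy: for every ordinal γ, ψ(γ) is a strongly critical ordinal (a fixed point of α ↦ φ α 0) and ψ(γ) ≥ Γ_{θ+1}. -/

import Mathlib

open Ordinal

/-- The binary Veblen function: `veblen 0 β = ω ^ β`, and for `α > 0`,
`veblen α` enumerates the common fixed points of `veblen γ` for `γ < α`. -/
noncomputable def veblen : Ordinal → Ordinal → Ordinal :=
  WellFounded.fix Ordinal.lt_wf
    (fun α ih => if α = 0 then fun β => omega0 ^ β
      else derivFamily (familyOfBFamily (α : Ordinal.{0}) (fun ξ h => ih ξ h)))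

/-- The set of strongly critical ordinals. -/
def StronglyCritical (γ : Ordinal) : Prop := _root_.veblen γ 0 = γ

/-- `Gamma β` is the `β`-th strongly critical ordinal. -/
noncomputable def Gamma : Ordinal → Ordinal :=
  enumOrd {γ | StronglyCritical γ}

/-- The least uncountable cardinal (as an ordinal) greater than `θ`. -/
noncomputable def OmegaB (θ : Ordinal) : Ordinal :=
  sInf {o | θ < o ∧ o.card.ord = o ∧ Cardinal.aleph0 < o.card}

/-- Closure of `{0, Ω} ∪ {Γ_β : β ≤ θ}` under `+`, `veblen` and the
given partial collapsing function `f` on arguments below `α`. -/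
def closB (θ α : Ordinal) (f : ∀ ξ, ξ < α → Ordinal) : Set Ordinal :=
  ⋂₀ {S : Set Ordinal |
      0 ∈ S ∧ OmegaB θ ∈ S ∧ (∀ β ≤ θ, Gamma β ∈ S) ∧
      (∀ x ∈ S, ∀ y ∈ S, x + y ∈ S) ∧
      (∀ x ∈ S, ∀ y ∈ S, _root_.veblen x y ∈ S) ∧
      (∀ ξ (h : ξ < α), ξ ∈ S → f ξ h ∈ S)}

/-- The relativised collapsing function `ψ_θ`. -/
noncomputable def psiB (θ : Ordinal) : Ordinal → Ordinal :=
  WellFounded.fix Ordinal.lt_wf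
    (fun α ih => sInf {β | β ∉ closB θ α (fun ξ h => ih ξ h)})

/-- The relativised collapsing hierarchy `B_θ(α)`. -/
def BB (θ α : Ordinal) : Set Ordinal :=
  closB θ α (fun ξ _ => psiB θ ξ)

/-- The least strongly critical ordinal strictly above `δ`. -/
noncomputable def gammaSucc (δ : Ordinal) : Ordinal :=
  sInf {γ | δ < γ ∧ StronglyCritical γ}

open Set

theorem veblen_def (α : Ordinal) : _root_.veblen α =
    if α = 0 then (fun β => omega0 ^ β)
    else derivFamily (familyOfBFamily α (fun ξ (_ : ξ < α) => _root_.veblen ξ)) :=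
  WellFounded.fix_eq _ _ _

theorem veblen_zero_eq (b : Ordinal) : _root_.veblen 0 b = omega0 ^ b := by
  rw [veblen_def]; simp

theorem veblen_pos_def {α : Ordinal} (h : α ≠ 0) :
    _root_.veblen α = derivFamily (familyOfBFamily α (fun ξ (_ : ξ < α) => _root_.veblen ξ)) := by
  rw [veblen_def, if_neg h]

theorem isNormal_veblen (α : Ordinal) : Order.IsNormal (_root_.veblen α) := by
  rcases eq_or_ne α 0 with rfl | h
  · rw [veblen_def, if_pos rfl]; exact isNormal_opow one_lt_omega0
  · rw [veblen_pos_def h]; exact isNormal_derivFamily _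

theorem veblen_fp {a α : Ordinal} (h : a < α) (b : Ordinal) :
    _root_.veblen a (_root_.veblen α b) = _root_.veblen α b := by
  rw [veblen_pos_def (fun h0 => ((zero_le (a := a)).not_gt (h0 ▸ h)))]
  have := derivFamily_fp (f := familyOfBFamily α (fun ξ (_ : ξ < α) => _root_.veblen ξ))
    (i := enum (α := α.ToType) (· < ·) ⟨a, h.trans_eq (type_toType _).symm⟩) (_root_.isNormal_veblen _) b
  rwa [familyOfBFamily_enum _ _ _ h] at this

theorem veblen_zero_pos (α : Ordinal) : 0 < _root_.veblen α 0 := by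
  rcases eq_or_ne α 0 with rfl | h
  · rw [veblen_zero_eq]; exact opow_pos _ omega0_pos
  · have h1 := veblen_fp (pos_iff_ne_zero.2 h) 0
    rw [veblen_zero_eq] at h1
    rw [← h1]; exact opow_pos _ omega0_pos

theorem strictMono_veblen_zero : StrictMono (fun a => _root_.veblen a 0) := by
  intro a b hab
  have h1 : _root_.veblen a (_root_.veblen b 0) = _root_.veblen b 0 := veblen_fp hab 0
  calc _root_.veblen a 0 < _root_.veblen a (_root_.veblen b 0) :=
        (_root_.isNormal_veblen a).strictMono (veblen_zero_pos b)
    _ = _root_.veblen b 0 := h1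

theorem stronglyCritical_pos {γ : Ordinal} (h : StronglyCritical γ) : 0 < γ :=
  h ▸ veblen_zero_pos γ

theorem sc_veblen_fix {γ : Ordinal} (h : StronglyCritical γ) {a : Ordinal} (ha : a < γ) :
    _root_.veblen a γ = γ := by
  have h1 := veblen_fp ha 0
  rwa [h] at h1

theorem sc_veblen_lt {γ : Ordinal} (h : StronglyCritical γ) {a b : Ordinal}
    (ha : a < γ) (hb : b < γ) : _root_.veblen a b < γ := by
  calc _root_.veblen a b < _root_.veblen a γ := (_root_.isNormal_veblen a).strictMono hb
    _ = γ := sc_veblen_fix h ha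

theorem sc_add_lt {γ : Ordinal} (h : StronglyCritical γ) {a b : Ordinal}
    (ha : a < γ) (hb : b < γ) : a + b < γ := by
  have h0 : _root_.veblen 0 γ = γ := sc_veblen_fix h (stronglyCritical_pos h)
  rw [veblen_zero_eq] at h0
  have := principal_add_omega0_opow γ
  rw [h0] at this
  exact this ha hb

theorem sc_intro {γ : Ordinal} (hl : Order.IsSuccLimit γ)
    (hv : ∀ a < γ, ∀ b < γ, _root_.veblen a b < γ) : StronglyCritical γ := by
  have hfix : ∀ a < γ, _root_.veblen a γ = γ := fun a ha =>
    le_antisymm (((_root_.isNormal_veblen a).le_iff_forall_le hl).2 fun b hb => (hv a ha b hb).le)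
      (_root_.isNormal_veblen a).strictMono.le_apply
  have hγ0 : γ ≠ 0 := hl.ne_zero
  show _root_.veblen γ 0 = γ
  apply le_antisymm
  · rw [veblen_pos_def hγ0, derivFamily_zero]
    exact nfpFamily_le_fp (fun i => (_root_.isNormal_veblen _).strictMono.monotone)
      (zero_le (a := γ)) (fun i => (hfix _ (typein_lt_self i)).le)
  · exact strictMono_veblen_zero.le_apply

noncomputable def scStep (x : Ordinal) : Ordinal :=
  (⨆ p : Iio x × Iio x, _root_.veblen p.1 p.2) + (x + 1)

theorem lt_scStep (x : Ordinal) : x < scStep x :=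
  lt_of_lt_of_le (lt_of_lt_of_le (Order.lt_succ x) (add_one_eq_succ x).ge) le_add_self

theorem veblen_lt_scStep {a b x : Ordinal} (ha : a < x) (hb : b < x) :
    _root_.veblen a b < scStep x := by
  have h1 : _root_.veblen a b ≤ ⨆ p : Iio x × Iio x, _root_.veblen p.1 p.2 :=
    Ordinal.le_iSup (fun p : Iio x × Iio x => _root_.veblen p.1 p.2) ⟨⟨a, ha⟩, ⟨b, hb⟩⟩
  refine h1.trans_lt ?_
  have hx1 : (0 : Ordinal) < x + 1 :=
    (zero_le (a := x)).trans_lt ((add_one_eq_succ x) ▸ Order.lt_succ x)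
  have h2 : (⨆ p : Iio x × Iio x, _root_.veblen p.1 p.2) + 0
      < (⨆ p : Iio x × Iio x, _root_.veblen p.1 p.2) + (x + 1) := add_lt_add_right hx1 _
  rw [add_zero] at h2
  exact h2
theorem not_bddAbove_sc : ¬ BddAbove {γ | StronglyCritical γ} := by
  rw [not_bddAbove_iff]
  intro δ
  set c : Ordinal := ⨆ n : ℕ, scStep^[n] (δ + 1) with hc
  have hstep : ∀ n : ℕ, scStep^[n] (δ + 1) < scStep^[n + 1] (δ + 1) := by
    intro n; rw [Function.iterate_succ_apply']; exact lt_scStep _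
  have hmono : StrictMono (fun n : ℕ => scStep^[n] (δ + 1)) :=
    strictMono_nat_of_lt_succ hstep
  have hle : ∀ n, scStep^[n] (δ + 1) ≤ c := fun n =>
    Ordinal.le_iSup (fun n : ℕ => scStep^[n] (δ + 1)) n
  have hδc : δ < c :=
    lt_of_lt_of_le ((add_one_eq_succ δ) ▸ Order.lt_succ δ) (hle 0)
  have hlim : Order.IsSuccLimit c := by
    rw [isSuccLimit_iff, Order.isSuccPrelimit_iff_succ_lt]
    refine ⟨fun h0 => ?_, fun a ha => ?_⟩
    · exact absurd (h0 ▸ hδc) (zero_le (a := δ)).not_gt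
    · rw [hc, Ordinal.lt_iSup_iff] at ha
      obtain ⟨n, hn⟩ := ha
      calc Order.succ a ≤ scStep^[n] (δ + 1) := Order.succ_le_of_lt hn
        _ < scStep^[n + 1] (δ + 1) := hstep n
        _ ≤ c := hle (n + 1)
  refine ⟨c, sc_intro hlim ?_, hδc⟩
  intro a ha b hb
  rw [hc, Ordinal.lt_iSup_iff] at ha hb
  obtain ⟨n, hn⟩ := ha; obtain ⟨m, hm⟩ := hb
  have hn' : a < scStep^[max n m] (δ + 1) := hn.trans_le (hmono.monotone (le_max_left n m))
  have hm' : b < scStep^[max n m] (δ + 1) := hm.trans_le (hmono.monotone (le_max_right n m))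
  calc _root_.veblen a b < scStep (scStep^[max n m] (δ + 1)) := veblen_lt_scStep hn' hm'
    _ = scStep^[max n m + 1] (δ + 1) := (Function.iterate_succ_apply' _ _ _).symm
    _ ≤ c := hle _

theorem decomp {β : Ordinal} (h0 : β ≠ 0) (hsc : ¬ StronglyCritical β) :
    ∃ a < β, ∃ b < β, a + b = β ∨ _root_.veblen a b = β := by
  by_cases hp : IsPrincipal (· + ·) β
  · rcases isPrincipal_add_iff_zero_or_omega0_opow.1 hp with rfl | ⟨c, rfl⟩
    · exact absurd rfl h0
    · by_cases hc : c < omega0 ^ c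
      · exact ⟨0, opow_pos c omega0_pos, c, hc, Or.inr (veblen_zero_eq c)⟩
      · -- c = ω ^ c
        have hceq : omega0 ^ c = c :=
          le_antisymm (not_lt.1 hc) (isNormal_opow one_lt_omega0).strictMono.le_apply
        simp only [hceq] at h0 hsc ⊢
        have hfix0 : _root_.veblen 0 c = c := by rw [veblen_zero_eq, hceq]
        -- there is a < c with _root_.veblen a c ≠ c
        have hA : ∃ a, a < c ∧ _root_.veblen a c ≠ c := by
          by_contra hall
          push_neg at hall
          have hex : ∃ b, _root_.veblen c b = c := by
            rw [veblen_pos_def h0]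
            exact (fp_iff_derivFamily (fun i => _root_.isNormal_veblen _)).1
              (fun i => hall _ (typein_lt_self i))
          obtain ⟨b, hb⟩ := hex
          apply hsc
          refine le_antisymm ?_ strictMono_veblen_zero.le_apply
          calc _root_.veblen c 0 ≤ _root_.veblen c b :=
                (_root_.isNormal_veblen c).strictMono.monotone (zero_le (a := b))
            _ = c := hb
        obtain ⟨a0, ha0, ha0'⟩ := hA
        set A : Set Ordinal := {a | _root_.veblen a c ≠ c} with hAdef
        have hane : A.Nonempty := ⟨a0, ha0'⟩
        have haA : sInf A ∈ A := csInf_mem hane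
        have haβ : sInf A < c := (csInf_le (OrderBot.bddBelow A) ha0').trans_lt ha0
        have hane0 : sInf A ≠ 0 := fun h' => haA (by rw [h']; exact hfix0)
        have hfixlt : ∀ i, i < sInf A → _root_.veblen i c = c := by
          intro i hi
          by_contra hne
          exact (csInf_le (OrderBot.bddBelow A) hne).not_gt hi
        have hex : ∃ b, _root_.veblen (sInf A) b = c := by
          rw [veblen_pos_def hane0]
          exact (fp_iff_derivFamily (fun i => _root_.isNormal_veblen _)).1
            (fun i => hfixlt _ (typein_lt_self i))
        obtain ⟨b, hb⟩ := hex
        have hbc : b < c := by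
          refine lt_of_le_of_ne (hb ▸ (_root_.isNormal_veblen (sInf A)).strictMono.le_apply) ?_
          rintro rfl
          exact haA hb
        exact ⟨sInf A, haβ, b, hbc, Or.inr hb⟩
  · rw [principal_add_iff_add_left_eq_self] at hp
    push_neg at hp
    obtain ⟨a, ha, hne⟩ := hp
    refine ⟨a, ha, β - a, ?_, Or.inl (Ordinal.add_sub_cancel_of_le ha.le)⟩
    refine (sub_le_self β a).lt_of_ne fun he => hne ?_
    conv_lhs => rw [← he]
    exact Ordinal.add_sub_cancel_of_le ha.le

section Gamma
theorem gamma_mem (β : Ordinal) : StronglyCritical (Gamma β) :=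
  enumOrd_mem not_bddAbove_sc β
theorem gamma_lt_gamma {a b : Ordinal} : Gamma a < Gamma b ↔ a < b :=
  enumOrd_lt_enumOrd not_bddAbove_sc
theorem le_gamma_self (a : Ordinal) : a ≤ Gamma a :=
  le_enumOrd_self not_bddAbove_sc
end Gamma

section closBlem
variable {θ α : Ordinal} {f : ∀ ξ, ξ < α → Ordinal}

theorem closB_zero_mem : (0 : Ordinal) ∈ closB θ α f :=
  Set.mem_sInter.2 fun _ hS => hS.1
theorem closB_omega_mem : OmegaB θ ∈ closB θ α f :=
  Set.mem_sInter.2 fun _ hS => hS.2.1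
theorem closB_gamma {β : Ordinal} (hβ : β ≤ θ) : Gamma β ∈ closB θ α f :=
  Set.mem_sInter.2 fun _ hS => hS.2.2.1 β hβ
theorem closB_add {x y : Ordinal} (hx : x ∈ closB θ α f) (hy : y ∈ closB θ α f) :
    x + y ∈ closB θ α f :=
  Set.mem_sInter.2 fun S hS => hS.2.2.2.1 x (hx S hS) y (hy S hS)
theorem closB_veblen {x y : Ordinal} (hx : x ∈ closB θ α f) (hy : y ∈ closB θ α f) :
    _root_.veblen x y ∈ closB θ α f :=
  Set.mem_sInter.2 fun S hS => hS.2.2.2.2.1 x (hx S hS) y (hy S hS)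

theorem mem_closB_of_lt {β : Ordinal} (hβ : β < Gamma (θ + 1)) : β ∈ closB θ α f := by
  induction β using Ordinal.induction with
  | h β IH =>
  by_cases hsc : StronglyCritical β
  · obtain ⟨η, hη⟩ := enumOrd_surjective not_bddAbove_sc hsc
    have hηθ : η ≤ θ := by
      have hη' : Gamma η = β := hη
      have h1 : η < θ + 1 := gamma_lt_gamma.1 (by rw [hη']; exact hβ)
      rwa [add_one_eq_succ, Order.lt_succ_iff] at h1
    rw [← (hη : Gamma η = β)]; exact closB_gamma hηθ
  · rcases eq_or_ne β 0 with rfl | h0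
    · exact closB_zero_mem
    · obtain ⟨a, ha, b, hb, hcase⟩ := decomp h0 hsc
      have haB := IH a ha (ha.trans hβ)
      have hbB := IH b hb (hb.trans hβ)
      rcases hcase with h | h
      · exact h ▸ closB_add haB hbB
      · exact h ▸ closB_veblen haB hbB

theorem closB_subset_Iio {ι : Ordinal} (hΩ : OmegaB θ < Gamma ι) (hθ : θ < ι)
    (hf : ∀ ξ (h : ξ < α), f ξ h < Gamma ι) : closB θ α f ⊆ Iio (Gamma ι) := by
  apply Set.sInter_subset_of_mem
  refine ⟨stronglyCritical_pos (gamma_mem ι), hΩ, ?_, ?_, ?_, ?_⟩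
  · exact fun β hβ => gamma_lt_gamma.2 (hβ.trans_lt hθ)
  · exact fun x hx y hy => sc_add_lt (gamma_mem ι) hx hy
  · exact fun x hx y hy => sc_veblen_lt (gamma_mem ι) hx hy
  · exact fun ξ h _ => hf ξ h
end closBlem

theorem psiB_def (θ α : Ordinal) : psiB θ α = sInf {β | β ∉ BB θ α} :=
  WellFounded.fix_eq _ _ _

theorem psiB_le_Gamma (θ : Ordinal) : ∀ α, psiB θ α ≤ Gamma (OmegaB θ + θ + α + 1) := by
  intro α
  induction α using Ordinal.induction with
  | h α IH =>
  have hθι : θ < OmegaB θ + θ + α + 1 :=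
    lt_of_le_of_lt (le_trans (le_add_self : θ ≤ OmegaB θ + θ) (le_self_add : OmegaB θ + θ ≤ OmegaB θ + θ + α))
      ((add_one_eq_succ _) ▸ Order.lt_succ _)
  have hΩι : OmegaB θ < Gamma (OmegaB θ + θ + α + 1) := by
    refine lt_of_lt_of_le ?_ (le_gamma_self _)
    exact lt_of_le_of_lt (le_trans (le_self_add : OmegaB θ ≤ OmegaB θ + θ) (le_self_add : OmegaB θ + θ ≤ OmegaB θ + θ + α))
      ((add_one_eq_succ _) ▸ Order.lt_succ _)
  have hf : ∀ ξ (h : ξ < α), psiB θ ξ < Gamma (OmegaB θ + θ + α + 1) := by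
    intro ξ hξ
    refine (IH ξ hξ).trans_lt (gamma_lt_gamma.2 ?_)
    have h1 : OmegaB θ + θ + ξ < OmegaB θ + θ + α := add_lt_add_right hξ _
    calc OmegaB θ + θ + ξ + 1 = Order.succ (OmegaB θ + θ + ξ) := add_one_eq_succ _
      _ ≤ OmegaB θ + θ + α := Order.succ_le_of_lt h1
      _ < OmegaB θ + θ + α + 1 := (add_one_eq_succ _) ▸ Order.lt_succ _
  rw [psiB_def]
  apply csInf_le (OrderBot.bddBelow _)
  exact fun hmem => absurd (mem_Iio.mp (closB_subset_Iio hΩι hθι hf hmem)) (lt_irrefl _)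



theorem stmt10 (θ γ : Ordinal) :
    StronglyCritical (psiB θ γ) ∧ Gamma (θ + 1) ≤ psiB θ γ := by
  have hnotmem : Gamma (OmegaB θ + θ + γ + 1) ∉ BB θ γ := by
    have hθι : θ < OmegaB θ + θ + γ + 1 :=
      lt_of_le_of_lt (le_trans (le_add_self : θ ≤ OmegaB θ + θ) (le_self_add : OmegaB θ + θ ≤ OmegaB θ + θ + γ))
        ((add_one_eq_succ _) ▸ Order.lt_succ _)
    have hΩι : OmegaB θ < Gamma (OmegaB θ + θ + γ + 1) := by
      refine lt_of_lt_of_le ?_ (le_gamma_self _)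
      exact lt_of_le_of_lt (le_trans (le_self_add : OmegaB θ ≤ OmegaB θ + θ) (le_self_add : OmegaB θ + θ ≤ OmegaB θ + θ + γ))
        ((add_one_eq_succ _) ▸ Order.lt_succ _)
    have hf : ∀ ξ (h : ξ < γ), psiB θ ξ < Gamma (OmegaB θ + θ + γ + 1) := by
      intro ξ hξ
      refine (psiB_le_Gamma θ ξ).trans_lt (gamma_lt_gamma.2 ?_)
      have h1 : OmegaB θ + θ + ξ < OmegaB θ + θ + γ := add_lt_add_right hξ _
      calc OmegaB θ + θ + ξ + 1 = Order.succ (OmegaB θ + θ + ξ) := add_one_eq_succ _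
        _ ≤ OmegaB θ + θ + γ := Order.succ_le_of_lt h1
        _ < OmegaB θ + θ + γ + 1 := (add_one_eq_succ _) ▸ Order.lt_succ _
    exact fun hmem => absurd (mem_Iio.mp (closB_subset_Iio hΩι hθι hf hmem)) (lt_irrefl _)
  have hne : {β | β ∉ BB θ γ}.Nonempty := ⟨_, hnotmem⟩
  have hψnot : psiB θ γ ∉ BB θ γ := by
    rw [psiB_def]; exact csInf_mem hne
  have hlt : ∀ β, β < psiB θ γ → β ∈ BB θ γ := by
    intro β hβ
    by_contra hb
    rw [psiB_def] at hβ
    exact (csInf_le (OrderBot.bddBelow _) (show β ∈ {b | b ∉ BB θ γ} from hb)).not_gt hβ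
  have hge : Gamma (θ + 1) ≤ psiB θ γ :=
    not_lt.1 fun h => hψnot (mem_closB_of_lt h)
  refine ⟨?_, hge⟩
  by_contra hnsc
  have h0 : psiB θ γ ≠ 0 := fun h => hψnot (h ▸ closB_zero_mem)
  obtain ⟨a, ha, b, hb, hc⟩ := decomp h0 hnsc
  rcases hc with h | h
  · exact hψnot (h ▸ closB_add (hlt a ha) (hlt b hb))
  · exact hψnot (h ▸ closB_veblen (hlt a ha) (hlt b hb))
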